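/- Forward direction of the kSUM reduction for three machines: let x_1,…,x_h be positive integers, T = Σ_{i=1}^h x_i, and k, B positive integers with 1 ≤ k < h and B < T. Consider the three-machine JIT flow-shop instance with kh+2 jobs: for each i ∈ {1,…,k} and j ∈ {1,…,h} a job J_{ij} with p^(1)_{ij} = x_j, p^(2)_{ij} = T − x_j, p^(3)_{ij} = 1, w_{ij} = T, d_{ij} = kT + i + 1; a job J_{kh+1} with p^(1)_{kh+1} = 1, p^(2)_{kh+1} = B, p^(3)_{kh+1} = 1, w_{kh+1} = k²(T+1)², d_{kh+1} = B + 2; and a job J_{kh+2} with p^(1)_{kh+2} = kT − B, p^(2)_{kh+2} = kT, p^(3)_{kh+2} = 1, w_{kh+2} = k²(T+1)², d_{kh+2} = 2kT + 2. If there exist indices j_1,…,j_k ∈ {1,…,h} (not necessarily distinct) with x_{j_1} + … + x_{j_k} = B, then this instance admits a feasible set E with Σ_{j∈E} w_j ≥ kT + 2k²(T+1)². -/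

import Mathlib

open Finset

/-- A just-in-time flow-shop instance on `m` machines with jobs of type `J`:
`p i j` is the (positive integer) processing time of job `j` on machine `i`,
`d j` its positive integer due date and `w j` its positive integer weight. -/
structure JITInstance (m : ℕ) (J : Type) where
  p : Fin m → J → ℕ
  d : J → ℕ
  w : J → ℕ
  p_pos : ∀ i j, 0 < p i j
  d_pos : ∀ j, 0 < d j
  w_pos : ∀ j, 0 < w j

/-- `S` is a JIT schedule of the job set `E`: on every machine the processing
intervals `(S i j, S i j + p i j]` of distinct jobs of `E` are pairwise disjoint,
each job's operation on machine `i+1` starts no earlier than its completion on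
machine `i`, and every job of `E` completes on the last machine exactly at its
due date.  (Start times are nonnegative automatically, being naturals.) -/
def IsJITSchedule {m : ℕ} {J : Type} (I : JITInstance m J)
    (E : Finset J) (S : Fin m → J → ℕ) : Prop :=
  (∀ i : Fin m, ∀ j ∈ E, ∀ j' ∈ E, j ≠ j' →
      S i j + I.p i j ≤ S i j' ∨ S i j' + I.p i j' ≤ S i j) ∧
  (∀ j ∈ E, ∀ i i' : Fin m, i'.val = i.val + 1 →
      S i j + I.p i j ≤ S i' j) ∧
  (∀ j ∈ E, ∀ i : Fin m, i.val = m - 1 →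
      S i j + I.p i j = I.d j)

/-- A job set is feasible if it admits a JIT schedule. -/
def Feasible {m : ℕ} {J : Type} (I : JITInstance m J) (E : Finset J) : Prop :=
  ∃ S : Fin m → J → ℕ, IsJITSchedule I E S

/-- The three-machine JIT flow-shop instance constructed in the kSUM reduction:
for each `i ∈ {1,…,k}`, `j ∈ {1,…,h}` a job `J_{ij}` (encoded `Sum.inl (i, j)`,
0-indexed) with `p¹ = x j`, `p² = T - x j`, `p³ = 1`, `w = T`, `d = kT + i + 1`;
a job `J_{kh+1}` (encoded `Sum.inr false`) with `p¹ = 1`, `p² = B`, `p³ = 1`,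
`w = k²(T+1)²`, `d = B + 2`; and a job `J_{kh+2}` (encoded `Sum.inr true`) with
`p¹ = kT - B`, `p² = kT`, `p³ = 1`, `w = k²(T+1)²`, `d = 2kT + 2`, where
`T = ∑ i, x i`. -/
def ksumInstance3 (h k B : ℕ) (x : Fin h → ℕ) (hx : ∀ i, 0 < x i)
    (hk : 1 ≤ k) (hkh : k < h) (hB : 0 < B) (hBT : B < ∑ i, x i) :
    JITInstance 3 (Fin k × Fin h ⊕ Bool) where
  p := fun i jb =>
    if i.val = 0 then
      Sum.elim (fun q => x q.2)
        (fun b => if b then k * (∑ i, x i) - B else 1) jb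
    else if i.val = 1 then
      Sum.elim (fun q => (∑ i, x i) - x q.2)
        (fun b => if b then k * (∑ i, x i) else B) jb
    else 1
  d := Sum.elim (fun q => k * (∑ i, x i) + q.1.val + 2)
    (fun b => if b then 2 * k * (∑ i, x i) + 2 else B + 2)
  w := Sum.elim (fun _ => ∑ i, x i)
    (fun _ => k ^ 2 * ((∑ i, x i) + 1) ^ 2)
  p_pos := by
    have hT : (∑ i, x i) ≤ k * (∑ i, x i) := Nat.le_mul_of_pos_left _ (by omega)
    have hxT : ∀ j : Fin h, x j < ∑ i, x i := by
      intro j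
      obtain ⟨j', hj'⟩ := Fintype.exists_ne_of_one_lt_card
        (by simpa using (by omega : 1 < h)) j
      exact Finset.single_lt_sum hj' (Finset.mem_univ _)
        (Finset.mem_univ _) (hx j') (fun _ _ _ => Nat.zero_le _)
    intro i jb
    try dsimp only
    split
    · rcases jb with ⟨a, j⟩ | b
      · simpa using hx j
      · rcases b with _ | _ <;> simp <;> omega
    · split
      · rcases jb with ⟨a, j⟩ | b
        · have := hxT j
          simp only [Sum.elim_inl]
          omega
        · rcases b with _ | _ <;> simp <;> omega
      · exact one_pos
  d_pos := by
    rintro (⟨a, j⟩ | b)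
    · simp only [Sum.elim_inl]
      omega
    · rcases b with _ | _ <;> simp
  w_pos := by
    rintro (⟨a, j⟩ | b)
    · simp only [Sum.elim_inl]
      omega
    · simp only [Sum.elim_inr]
      exact Nat.mul_pos (pow_pos (by omega : 0 < k) 2)
        (pow_pos (by omega : 0 < (∑ i, x i) + 1) 2)

/-- forward direction of the kSUM reduction for three machines.
If some `k` of the numbers `x 0, …, x (h-1)` (with repetitions allowed) sum to
`B`, then the constructed instance has a feasible set of total weight at least
`kT + 2k²(T+1)²`. -/
theorem ksum_three_machines_forward (h k B : ℕ) (x : Fin h → ℕ)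
    (hx : ∀ i, 0 < x i) (hk : 1 ≤ k) (hkh : k < h) (hB : 0 < B)
    (hBT : B < ∑ i, x i)
    (f : Fin k → Fin h) (hf : ∑ i, x (f i) = B) :
    ∃ E : Finset (Fin k × Fin h ⊕ Bool),
      Feasible (ksumInstance3 h k B x hx hk hkh hB hBT) E ∧
      k * (∑ i, x i) + 2 * (k ^ 2 * ((∑ i, x i) + 1) ^ 2)
        ≤ ∑ jb ∈ E, (ksumInstance3 h k B x hx hk hkh hB hBT).w jb := by
  
  classical
  set T := ∑ i, x i with hTdef
  have hxT : ∀ j : Fin h, x j < T := by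
    intro j
    obtain ⟨j', hj'⟩ := Fintype.exists_ne_of_one_lt_card
      (by simpa using (by omega : 1 < h)) j
    exact Finset.single_lt_sum hj' (Finset.mem_univ _) (Finset.mem_univ _) (hx j')
      (fun _ _ _ => Nat.zero_le _)
  have hT1 : 1 ≤ T := by omega
  have hTkT : T ≤ k * T := Nat.le_mul_of_pos_left _ (by omega)
  have hkkT : k ≤ k * T := by
    calc k = k * 1 := (mul_one k).symm
      _ ≤ k * T := Nat.mul_le_mul_left k hT1
  set g : ℕ → ℕ := fun l => if hl : l < k then x (f ⟨l, hl⟩) else 0 with hg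
  set s : ℕ → ℕ := fun i => ∑ l ∈ Finset.range i, g l with hs
  have hstep : ∀ i, s (i + 1) = s i + g i := fun i => Finset.sum_range_succ g i
  have hgfi : ∀ i : Fin k, g i.val = x (f i) := by
    intro i; simp [hg, i.isLt]
  have hg1 : ∀ n, n < k → 1 ≤ g n := by
    intro n hn; simp only [hg, dif_pos hn]; exact hx _
  have hgT : ∀ n, n < k → g n ≤ T - 1 := by
    intro n hn; simp only [hg, dif_pos hn]; have := hxT (f ⟨n, hn⟩); omega
  have hsk : s k = B := by
    have h1 : s k = ∑ i : Fin k, g i.val := (Fin.sum_univ_eq_sum_range g k).symm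
    rw [h1, ← hf]
    exact Finset.sum_congr rfl fun i _ => hgfi i
  have hmono : ∀ a b : ℕ, a ≤ b → s a ≤ s b := fun a b hab =>
    Finset.sum_le_sum_of_subset (Finset.range_subset_range.2 hab)
  have hsB : ∀ n, n ≤ k → s n ≤ B := fun n hn => hsk ▸ hmono n k hn
  have hdiff : ∀ b ≤ k, ∀ a ≤ b, s b ≤ s a + (b - a) * (T - 1) := by
    intro b
    induction b with
    | zero => intro _ a ha; simp [Nat.le_zero.mp ha]
    | succ n ih =>
      intro hnk a ha
      rcases Nat.eq_or_lt_of_le ha with rfl | ha'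
      · simp
      · have h1 := ih (by omega) a (by omega)
        have h2 := hgT n (by omega)
        have h3 := hstep n
        have h4 : (n + 1 - a) * (T - 1) = (n - a) * (T - 1) + (T - 1) := by
          have hna : n + 1 - a = (n - a) + 1 := by omega
          rw [hna, Nat.succ_mul]
        omega
  have hmul : ∀ m : ℕ, m * (T - 1) + m = m * T := by
    intro m
    have h2 : T - 1 + 1 = T := by omega
    calc m * (T - 1) + m = m * (T - 1 + 1) := by ring
      _ = m * T := by rw [h2]
  have hsiT : ∀ n, n ≤ k → s n ≤ n * T := by
    intro n hn
    have h1 := hdiff n hn 0 (Nat.zero_le _)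
    simp only [Nat.sub_zero] at h1
    have h2 := hmul n
    have h3 : s 0 = 0 := by simp [hs]
    omega
  have hordT : ∀ a b : ℕ, a ≤ b → b ≤ k → s b + a * T ≤ s a + b * T := by
    intro a b hab hbk
    have h1 := hdiff b hbk a hab
    have h2 := hmul (b - a)
    have h3 : a * T + (b - a) * T = b * T := by
      rw [← Nat.add_mul]; congr 1; omega
    omega
  have hend1 : ∀ n, n < k → (B + 1 + n * T - s n) + (T - g n) = B + 1 + (n + 1) * T - s (n + 1) := by
    intro n hn
    have h1 := hsB n hn.le
    have h2 := hsiT n hn.le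
    have h3 := hgT n hn
    have h4 := hstep n
    have h5 : (n + 1) * T = n * T + T := by ring
    have h6 := hsB (n + 1) hn
    omega
  have hM1true : ∀ n, n < k → (B + 1 + n * T - s n) + (T - g n) ≤ k * T + 1 := by
    intro n hn
    rw [hend1 n hn]
    have h1 := hordT (n + 1) k hn le_rfl
    rw [hsk] at h1
    have h2 := hsB (n + 1) hn
    omega
  have hM1ord : ∀ n n', n < n' → n' ≤ k → (B + 1 + n * T - s n) + (T - g n) ≤ B + 1 + n' * T - s n' := by
    intro n n' hnn hn'k
    rw [hend1 n (lt_of_lt_of_le hnn hn'k)]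
    have h1 := hordT (n + 1) n' hnn hn'k
    have h2 := hsB n' hn'k
    have h3 := hsB (n + 1) (le_trans hnn hn'k)
    omega
  have hM1false : ∀ n, n < k → 1 + B ≤ B + 1 + n * T - s n := by
    intro n hn; have := hsiT n hn.le; omega
  have hprec01 : ∀ n, n < k → 1 + s n + g n ≤ B + 1 + n * T - s n := by
    intro n hn
    have h1 := hsB (n + 1) hn
    have h2 := hsiT n hn.le
    have h3 := hstep n
    omega
  clear_value T g s
  have hmem : ∀ jb : Fin k × Fin h ⊕ Bool,
      jb ∈ (Finset.univ.image fun i : Fin k => (Sum.inl (i, f i) : Fin k × Fin h ⊕ Bool))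
        ∪ {Sum.inr false, Sum.inr true} ↔
      (∃ i : Fin k, jb = Sum.inl (i, f i)) ∨ jb = Sum.inr false ∨ jb = Sum.inr true := by
    intro jb
    simp only [Finset.mem_union, Finset.mem_image, Finset.mem_insert, Finset.mem_singleton,
      Finset.mem_univ, true_and]
    constructor
    · rintro (⟨i, rfl⟩ | hb | hb)
      · exact Or.inl ⟨i, rfl⟩
      · exact Or.inr (Or.inl hb)
      · exact Or.inr (Or.inr hb)
    · rintro (⟨i, rfl⟩ | rfl | rfl)
      · exact Or.inl ⟨i, rfl⟩
      · exact Or.inr (Or.inl rfl)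
      · exact Or.inr (Or.inr rfl)
  refine ⟨(Finset.univ.image fun i : Fin k => (Sum.inl (i, f i) : Fin k × Fin h ⊕ Bool))
      ∪ {Sum.inr false, Sum.inr true},
    ⟨fun t jb =>
      Sum.elim
        (fun q : Fin k × Fin h =>
          if t.val = 0 then 1 + s q.1.val
          else if t.val = 1 then B + 1 + q.1.val * T - s q.1.val
          else k * T + q.1.val + 1)
        (fun b : Bool =>
          if b then (if t.val = 0 then B + 1 else if t.val = 1 then k * T + 1 else 2 * k * T + 1)
          else (if t.val = 0 then 0 else if t.val = 1 then 1 else B + 1)) jb,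
      ?_, ?_, ?_⟩, ?_⟩
  · -- disjointness
    intro t jb hjb jb' hjb' hne
    rw [hmem] at hjb hjb'
    obtain ⟨tv, htv⟩ := t
    rcases hjb with ⟨i, rfl⟩ | rfl | rfl <;> rcases hjb' with ⟨i', rfl⟩ | rfl | rfl <;>
      interval_cases tv <;>
      simp only [ksumInstance3, Sum.elim_inl, Sum.elim_inr, ← hTdef] <;>
      norm_num
    -- 1: inl inl machine 0
    · have hv : i.val ≠ i'.val := fun hv => hne (by rw [Fin.val_injective hv])
      rw [← hgfi i, ← hgfi i']
      rcases Nat.lt_or_ge i.val i'.val with hlt | hge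
      · left
        have h1 := hstep i.val
        have h2 := hmono (i.val + 1) i'.val hlt
        omega
      · right
        have h1 := hstep i'.val
        have h2 := hmono (i'.val + 1) i.val (by omega)
        omega
    -- 2: inl inl machine 1
    · have hv : i.val ≠ i'.val := fun hv => hne (by rw [Fin.val_injective hv])
      rw [← hgfi i, ← hgfi i']
      rcases Nat.lt_or_ge i.val i'.val with hlt | hge
      · exact Or.inl (hM1ord i.val i'.val hlt i'.isLt.le)
      · exact Or.inr (hM1ord i'.val i.val (by omega) i.isLt.le)
    -- 3: inl inl machine 2
    · have hv : i.val ≠ i'.val := fun hv => hne (by rw [Fin.val_injective hv])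
      omega
    -- 4: inl false machine 1
    · exact Or.inr (hM1false i.val i.isLt)
    -- 5: inl false machine 2
    · skip
      have := i.isLt
      omega
    -- 6: inl true machine 0
    · left
      rw [← hgfi i]
      have h1 := hstep i.val
      have h2 := hsB (i.val + 1) i.isLt
      omega
    -- 7: inl true machine 1
    · left
      rw [← hgfi i]
      exact hM1true i.val i.isLt
    -- 8: inl true machine 2
    · skip
      have h2kT : 2 * k * T = k * T + k * T := by ring
      have := i.isLt
      omega
    -- 9: false inl machine 1
    · exact Or.inl (hM1false i'.val i'.isLt)
    -- 10: false inl machine 2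
    · skip
      omega
    -- 11-13: false false
    · exact absurd rfl hne
    · exact absurd rfl hne
    · exact absurd rfl hne
    -- 14: false true machine 1
    · left
      omega
    -- 15: false true machine 2
    · have h2kT : 2 * k * T = k * T + k * T := by ring
      omega
    -- 16: true inl machine 0
    · right
      rw [← hgfi i']
      have h1 := hstep i'.val
      have h2 := hsB (i'.val + 1) i'.isLt
      omega
    -- 17: true inl machine 1
    · right
      rw [← hgfi i']
      exact hM1true i'.val i'.isLt
    -- 18: true inl machine 2
    · skip
      have h2kT : 2 * k * T = k * T + k * T := by ring
      have := i'.isLt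
      omega
    -- 19: true false machine 1
    · right
      omega
    -- 20: true false machine 2
    · skip
      have h2kT : 2 * k * T = k * T + k * T := by ring
      omega
    -- 21-23: true true
    · exact absurd rfl hne
    · exact absurd rfl hne
    · exact absurd rfl hne
  · -- precedence
    intro jb hjb t t' htt'
    rw [hmem] at hjb
    obtain ⟨tv, htv⟩ := t
    obtain ⟨tv', htv'⟩ := t'
    simp only at htt'
    rcases hjb with ⟨i, rfl⟩ | rfl | rfl <;> interval_cases tv <;> interval_cases tv' <;>
      simp only [ksumInstance3, Sum.elim_inl, Sum.elim_inr, ← hTdef] <;>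
      norm_num <;> try omega
    -- inl (0,1)
    · rw [← hgfi i]
      exact hprec01 i.val i.isLt
    -- inl (1,2)
    · rw [← hgfi i]
      have h1 := hM1true i.val i.isLt
      omega
    -- true (0,1)
    · have hBkT : B ≤ k * T := le_trans hBT.le hTkT
      have h3 : B + (k * T - B) = k * T := Nat.add_sub_cancel' hBkT
      omega
    -- true (1,2)
    · exact le_of_eq (by ring)
  · -- due dates
    intro jb hjb t ht
    rw [hmem] at hjb
    obtain ⟨tv, htv⟩ := t
    simp only at ht
    rcases hjb with ⟨i, rfl⟩ | rfl | rfl <;> interval_cases tv <;>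
      simp only [ksumInstance3, Sum.elim_inl, Sum.elim_inr, ← hTdef] <;>
      norm_num <;> try omega
  · -- weight bound
    have hdisj : Disjoint
        (Finset.univ.image fun i : Fin k => (Sum.inl (i, f i) : Fin k × Fin h ⊕ Bool))
        ({Sum.inr false, Sum.inr true} : Finset (Fin k × Fin h ⊕ Bool)) := by
      simp [Finset.disjoint_left]
    rw [Finset.sum_union hdisj]
    have hinj : ∀ a ∈ (Finset.univ : Finset (Fin k)), ∀ b ∈ Finset.univ,
        (Sum.inl (a, f a) : Fin k × Fin h ⊕ Bool) = Sum.inl (b, f b) → a = b := by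
      intro a _ b _ hab
      have h2 : (a, f a) = (b, f b) := Sum.inl.inj hab
      exact (Prod.ext_iff.mp h2).1
    rw [Finset.sum_image hinj]
    rw [Finset.sum_pair (show (Sum.inr false : Fin k × Fin h ⊕ Bool) ≠ Sum.inr true by simp)]
    simp only [ksumInstance3, Sum.elim_inl, Sum.elim_inr, ← hTdef]
    rw [Finset.sum_const, Finset.card_univ, Fintype.card_fin, smul_eq_mul]
    have hr : k ^ 2 * (T + 1) ^ 2 + k ^ 2 * (T + 1) ^ 2 = 2 * (k ^ 2 * (T + 1) ^ 2) := by ring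
    omega
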